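/- Let (Ω, 𝒫) be a probability space, B an event with 𝒫(B) > 0, j ∈ ℕ, and C_j, C_{j+1}, … events such that there exists ε' > 0 with lim_{n→∞} 𝒫(Cₙ | C_jᶜ ∩ … ∩ C_tᶜ ∩ B) = ε' for every t ≥ j (when the conditioning event has positive probability). Then lim_{n→∞} 𝒫(⋃_{i=j}^n Cᵢ | B) = 1. -/

import Mathlib

open MeasureTheory ProbabilityTheory Filter

/-- Conditional version of the Lévy-type lemma: if `𝒫(B) > 0` and there is
`ε' > 0` such that for every `t ≥ j`, either the conditioning event
`C_jᶜ ∩ … ∩ C_tᶜ ∩ B` is null or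
`lim_{n→∞} 𝒫(Cₙ | C_jᶜ ∩ … ∩ C_tᶜ ∩ B) = ε'`, then
`𝒫(⋃_{i=j}^n Cᵢ | B) → 1`. -/
theorem stmt3 {Ω : Type*} [MeasurableSpace Ω] (μ : Measure Ω) [IsProbabilityMeasure μ]
    (B : Set Ω) (hBmeas : MeasurableSet B) (hB : 0 < μ B)
    (j : ℕ) (C : ℕ → Set Ω) (hC : ∀ i, MeasurableSet (C i))
    (ε' : ℝ) (hε' : 0 < ε')
    (h : ∀ t : ℕ, j ≤ t →
      μ ((⋂ i ∈ Finset.Icc j t, (C i)ᶜ) ∩ B) = 0 ∨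
      Filter.Tendsto
        (fun n => ProbabilityTheory.cond μ ((⋂ i ∈ Finset.Icc j t, (C i)ᶜ) ∩ B) (C n))
        Filter.atTop (nhds (ENNReal.ofReal ε'))) :
    Filter.Tendsto (fun n => ProbabilityTheory.cond μ B (⋃ i ∈ Finset.Icc j n, C i))
      Filter.atTop (nhds 1) := by
  set D : ℕ → Set Ω := fun t => (⋂ i ∈ Finset.Icc j t, (C i)ᶜ) ∩ B with hD
  have hDmeas : ∀ t, MeasurableSet (D t) := fun t =>
    (MeasurableSet.biInter (Finset.Icc j t).countable_toSet fun i _ => (hC i).compl).inter hBmeas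
  have hDsub : ∀ a b : ℕ, a ≤ b → D b ⊆ D a := by
    intro a b hab x hx
    refine ⟨?_, hx.2⟩
    have hx1 := hx.1
    simp only [Set.mem_iInter] at hx1 ⊢
    exact fun i hi => hx1 i (Finset.Icc_subset_Icc_right hab hi)
  have hDanti : Antitone fun n => μ (D n) := fun a b hab => measure_mono (hDsub a b hab)
  -- main convergence
  have hmain : Tendsto (fun n => μ (D n)) atTop (nhds 0) := by
    have htend := tendsto_atTop_iInf hDanti
    set L := ⨅ n, μ (D n) with hLdef
    have hLtop : L ≠ ⊤ := ne_top_of_le_ne_top (measure_ne_top μ (D 0)) (iInf_le _ 0)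
    suffices hL0 : L = 0 by rwa [hL0] at htend
    by_contra hL
    have hDpos : ∀ t, μ (D t) ≠ 0 := fun t =>
      fun h0 => hL (le_antisymm (le_trans (iInf_le _ t) h0.le) zero_le)
    set e : ENNReal := min (ENNReal.ofReal ε' / 2) (1 / 2) with he
    have hεpos : (0 : ENNReal) < ENNReal.ofReal ε' := ENNReal.ofReal_pos.mpr hε'
    have he0 : 0 < e := lt_min (ENNReal.div_pos hεpos.ne' ENNReal.ofNat_ne_top)
      (by norm_num)
    have helt : e < ENNReal.ofReal ε' :=
      lt_of_le_of_lt (min_le_left _ _) (ENNReal.half_lt_self hεpos.ne' ENNReal.ofReal_ne_top)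
    have he1 : e < 1 := lt_of_le_of_lt (min_le_right _ _) (by norm_num)
    have hkey : ∀ n, j ≤ n → L ≤ (1 - e) * μ (D n) := by
      intro n hn
      rcases h n hn with h0 | hcond
      · exact absurd h0 (hDpos n)
      · have hev : ∀ᶠ m in atTop, e < ProbabilityTheory.cond μ (D n) (C m) :=
          hcond.eventually (eventually_gt_nhds helt)
        obtain ⟨m, hm1, hm2⟩ := (hev.and (eventually_ge_atTop (n + 1))).exists
        have hjm : j ≤ m := le_trans hn (le_trans (Nat.le_succ n) hm2)
        have hsubC : D m ⊆ (C m)ᶜ := by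
          intro x hx
          have hx1 := hx.1
          simp only [Set.mem_iInter] at hx1
          exact hx1 m (Finset.mem_Icc.mpr ⟨hjm, le_refl m⟩)
        have hdm : D m ⊆ D n \ C m := fun x hx =>
          ⟨hDsub n m (le_trans (Nat.le_succ n) hm2) hx, hsubC hx⟩
        have hdiff : μ (D n \ C m) = μ (D n) - μ (D n ∩ C m) := by
          rw [← Set.diff_self_inter]
          exact measure_diff Set.inter_subset_left
            ((hDmeas n).inter (hC m)).nullMeasurableSet (measure_ne_top μ _)
        have hcondge : e * μ (D n) ≤ μ (D n ∩ C m) := by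
          have h1 := hm1.le
          rw [cond_apply (hDmeas n) μ (C m), ← ENNReal.div_eq_inv_mul] at h1
          exact (ENNReal.le_div_iff_mul_le (Or.inl (hDpos n))
            (Or.inl (measure_ne_top μ _))).mp h1
        calc L ≤ μ (D m) := iInf_le _ m
          _ ≤ μ (D n \ C m) := measure_mono hdm
          _ = μ (D n) - μ (D n ∩ C m) := hdiff
          _ ≤ μ (D n) - e * μ (D n) := tsub_le_tsub_left hcondge _
          _ = (1 - e) * μ (D n) := by
              rw [ENNReal.sub_mul (fun _ _ => measure_ne_top μ _), one_mul]
    have hlim2 : Tendsto (fun n => (1 - e) * μ (D n)) atTop (nhds ((1 - e) * L)) :=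
      ENNReal.Tendsto.const_mul htend (Or.inr (ne_top_of_le_ne_top ENNReal.one_ne_top
        tsub_le_self))
    have hLle : L ≤ (1 - e) * L :=
      ge_of_tendsto hlim2 ((eventually_ge_atTop j).mono hkey)
    have hlt : (1 - e) * L < 1 * L :=
      by rw [mul_comm _ L, mul_comm 1 L]; exact (ENNReal.mul_lt_mul_right hL hLtop
        (ENNReal.sub_lt_self ENNReal.one_ne_top one_ne_zero he0.ne'))
    rw [one_mul] at hlt
    exact absurd hLle (not_le.mpr hlt)
  -- rewrite the conditional probability
  have heq : ∀ n, ProbabilityTheory.cond μ B (⋃ i ∈ Finset.Icc j n, C i)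
      = (μ B)⁻¹ * (μ B - μ (D n)) := by
    intro n
    rw [cond_apply hBmeas μ _]
    congr 1
    have hU : MeasurableSet (⋃ i ∈ Finset.Icc j n, C i) :=
      MeasurableSet.biUnion (Finset.Icc j n).countable_toSet fun i _ => hC i
    have hDn : D n = B \ ⋃ i ∈ Finset.Icc j n, C i := by
      rw [hD, Set.diff_eq, Set.compl_iUnion₂, Set.inter_comm]
    rw [hDn]
    exact ENNReal.eq_sub_of_add_eq (measure_ne_top μ _)
      (measure_inter_add_diff B hU)
  simp only [heq]
  have hfin := measure_ne_top μ B
  have : Tendsto (fun n => (μ B)⁻¹ * (μ B - μ (D n))) atTop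
      (nhds ((μ B)⁻¹ * (μ B - 0))) :=
    ENNReal.Tendsto.const_mul
      (ENNReal.Tendsto.sub tendsto_const_nhds hmain (Or.inl hfin))
      (Or.inr (ENNReal.inv_ne_top.mpr hB.ne'))
  rwa [tsub_zero, ENNReal.inv_mul_cancel hB.ne' hfin] at this
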